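/- arXiv:0810.0654 — 2 statements merged into one kernel-verified Lean document; each statement's English description precedes it below -/
import Mathlib

section
/- Assume α < N and set a̲ = (N-α)^{1/(q-1)}. Then for any a ∈ (0, a̲], the global solution w(·,a) satisfies w(r,a) > 0 for all r ∈ [0,∞). -/
open Set Filter Topology Asymptotics

/-- The p-Laplacian nonlinearity φ_p(x) = |x|^{p-2} x. -/
noncomputable def phiP (p x : ℝ) : ℝ := |x| ^ (p - 2) * x

/-- `w` is a solution of equation (E) on the interval `I ⊆ (0,∞)`:
`w` is C¹ on `I`, `|w'|^{p-2} w'` is C¹ on `I`, and the equation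
`(|w'|^{p-2}w')' + ((N-1)/r)|w'|^{p-2}w' + r w' + α w + |w|^{q-1} w = 0`
holds on `I` (derivatives taken within `I`). -/
def IsSolutionOn (N : ℕ) (p q α : ℝ) (w : ℝ → ℝ) (I : Set ℝ) : Prop :=
  ContDiffOn ℝ 1 w I ∧
  ContDiffOn ℝ 1 (fun r => phiP p (derivWithin w I r)) I ∧
  ∀ r ∈ I,
    derivWithin (fun s => phiP p (derivWithin w I s)) I r
      + ((N : ℝ) - 1) / r * phiP p (derivWithin w I r)
      + r * derivWithin w I r + α * w r + |w r| ^ (q - 1) * w r = 0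

/-- `w` is the global solution of (E) on `[0,∞)` with `w(0) = a`, `w'(0) = 0`:
`w ∈ C¹([0,∞))`, `|w'|^{p-2}w' ∈ C¹([0,∞))`, and (E) holds on `(0,∞)`. -/
def IsGlobalSolution (N : ℕ) (p q α a : ℝ) (w : ℝ → ℝ) : Prop :=
  ContDiffOn ℝ 1 w (Ici 0) ∧
  ContDiffOn ℝ 1 (fun r => phiP p (derivWithin w (Ici 0) r)) (Ici 0) ∧
  (∀ r ∈ Ioi (0 : ℝ),
    derivWithin (fun s => phiP p (derivWithin w (Ici 0) s)) (Ici 0) r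
      + ((N : ℝ) - 1) / r * phiP p (derivWithin w (Ici 0) r)
      + r * derivWithin w (Ici 0) r + α * w r + |w r| ^ (q - 1) * w r = 0) ∧
  w 0 = a ∧ derivWithin w (Ici 0) 0 = 0

/-- `r` is an isolated zero of `w` relative to the set `I`. -/
def IsIsolatedZeroOn (w : ℝ → ℝ) (I : Set ℝ) (r : ℝ) : Prop :=
  r ∈ I ∧ w r = 0 ∧ ∀ᶠ s in 𝓝[I \ {r}] r, w s ≠ 0

/-- `w` has at least `n` isolated zeros in `(0,∞)`. -/
def HasAtLeastIsolatedZeros (w : ℝ → ℝ) (n : ℕ) : Prop :=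
  ∃ z : Fin n → ℝ, StrictMono z ∧ ∀ i, 0 < z i ∧ IsIsolatedZeroOn w (Ici 0) (z i)

lemma phiP_zero (p : ℝ) : phiP p 0 = 0 := by simp [phiP]

lemma phiP_eq_zero {p x : ℝ} (h : phiP p x = 0) : x = 0 := by
  by_contra hx
  have h1 : 0 < |x| ^ (p - 2) := Real.rpow_pos_of_pos (abs_pos.2 hx) _
  rcases mul_eq_zero.1 h with h2 | h2
  · exact absurd h2 (ne_of_gt h1)
  · exact hx h2

lemma neg_of_phiP_neg {p x : ℝ} (h : phiP p x < 0) : x < 0 := by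
  by_contra hx
  push_neg at hx
  exact absurd (mul_nonneg (Real.rpow_nonneg (abs_nonneg x) _) hx) (not_le.2 h)

lemma pow_pred_eq {r : ℝ} (hr : r ≠ 0) (n : ℕ) :
    (n : ℝ) * r ^ (n - 1) = (n : ℝ) * r ^ n / r := by
  cases n with
  | zero => simp
  | succ m =>
    rw [Nat.succ_sub_one, pow_succ]
    field_simp

/-- Assume `α < N` and set `a̲ = (N-α)^{1/(q-1)}`. Then for any `a ∈ (0, a̲]`,
the global solution `w(·,a)` is positive on `[0,∞)`. -/
theorem stmt2 (N : ℕ) (hN : 1 ≤ N) (p q α : ℝ) (hp : 1 < p) (hq : 1 < q) (hα : 0 < α)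
    (hαN : α < N) (a : ℝ) (ha : 0 < a) (ha' : a ≤ ((N : ℝ) - α) ^ (1 / (q - 1)))
    (w : ℝ → ℝ) (hw : IsGlobalSolution N p q α a w) :
    ∀ r ∈ Ici (0 : ℝ), 0 < w r := by
  obtain ⟨n, rfl⟩ : ∃ n, N = n + 1 := ⟨N - 1, (Nat.succ_pred_eq_of_pos hN).symm⟩
  obtain ⟨hwC, hφC, hEq, hw0, hw'0⟩ := hw
  set w' : ℝ → ℝ := derivWithin w (Ici 0) with hw'def
  set φ : ℝ → ℝ := fun r => phiP p (w' r) with hφdef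
  set ab : ℝ := ((↑(n + 1) : ℝ) - α) ^ (1 / (q - 1)) with habdef
  have hq1 : 0 < q - 1 := by linarith
  have hNα : (0 : ℝ) < (↑(n + 1) : ℝ) - α := by
    have : α < (↑(n + 1) : ℝ) := hαN
    linarith
  have hab_pos : 0 < ab := Real.rpow_pos_of_pos hNα _
  have hab_pow : ab ^ (q - 1) = (↑(n + 1) : ℝ) - α := by
    rw [habdef, ← Real.rpow_mul hNα.le, one_div, inv_mul_cancel₀ (ne_of_gt hq1),
      Real.rpow_one]
  have hUD : UniqueDiffOn ℝ (Ici (0 : ℝ)) := uniqueDiffOn_Ici 0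
  have hwcont : ContinuousOn w (Ici 0) := hwC.continuousOn
  have hw'cont : ContinuousOn w' (Ici 0) := hwC.continuousOn_derivWithin hUD le_rfl
  have hφcont : ContinuousOn φ (Ici 0) := hφC.continuousOn
  have hφ0 : φ 0 = 0 := by rw [hφdef]; simp only [hw'0]; exact phiP_zero p
  -- derivative facts
  have hwD : ∀ r : ℝ, 0 < r → HasDerivAt w (w' r) r := by
    intro r hr
    have hmem : Ici (0 : ℝ) ∈ 𝓝 r := Ici_mem_nhds hr
    have h1 : DifferentiableWithinAt ℝ w (Ici 0) r := (hwC.differentiableOn one_ne_zero) r hr.le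
    have h3 : w' r = deriv w r := derivWithin_of_mem_nhds hmem
    rw [h3]
    exact (h1.differentiableAt hmem).hasDerivAt
  have hφD : ∀ r : ℝ, 0 < r → HasDerivAt φ (deriv φ r) r := by
    intro r hr
    have hmem : Ici (0 : ℝ) ∈ 𝓝 r := Ici_mem_nhds hr
    have h1 : DifferentiableWithinAt ℝ φ (Ici 0) r := (hφC.differentiableOn one_ne_zero) r hr.le
    exact (h1.differentiableAt hmem).hasDerivAt
  have hODE : ∀ r : ℝ, 0 < r →
      deriv φ r = -((n : ℝ) / r * φ r) - r * w' r - α * w r - |w r| ^ (q - 1) * w r := by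
    intro r hr
    have h := hEq r (mem_Ioi.2 hr)
    have h3 : derivWithin φ (Ici 0) r = deriv φ r := derivWithin_of_mem_nhds (Ici_mem_nhds hr)
    rw [h3] at h
    have hc : ((↑(n + 1) : ℝ) - 1) = (n : ℝ) := by push_cast; ring
    rw [hc] at h
    linarith
  -- derivative of F = r^{n+1} w + r^n φ
  have hFD : ∀ r : ℝ, 0 < r →
      HasDerivAt (fun x => x ^ (n + 1) * w x + x ^ n * φ x)
        (r ^ n * (((↑(n + 1) : ℝ) - α) * w r - |w r| ^ (q - 1) * w r)) r := by
    intro r hr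
    have hrne : r ≠ 0 := ne_of_gt hr
    have h1 := (hasDerivAt_pow (n + 1) r).mul (hwD r hr)
    have h2 := (hasDerivAt_pow n r).mul (hφD r hr)
    have h12 := h1.add h2
    refine h12.congr_deriv ?_
    symm
    rw [hODE r hr]
    simp only [Nat.add_sub_cancel]
    rw [pow_pred_eq hrne n]
    have hc : ((↑(n + 1) : ℝ)) = (n : ℝ) + 1 := by push_cast; ring
    rw [hc]
    field_simp
    ring
  -- derivative of G = r^n φ
  have hGD : ∀ r : ℝ, 0 < r →
      HasDerivAt (fun x => x ^ n * φ x)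
        (r ^ n * (-(r * w' r) - α * w r - |w r| ^ (q - 1) * w r)) r := by
    intro r hr
    have hrne : r ≠ 0 := ne_of_gt hr
    have h2 := (hasDerivAt_pow n r).mul (hφD r hr)
    refine h2.congr_deriv ?_
    symm
    rw [hODE r hr]
    rw [pow_pred_eq hrne n]
    field_simp
    ring
  -- the function H is negative near 0
  have hHcont : ContinuousOn (fun r => -(r * w' r) - α * w r - |w r| ^ (q - 1) * w r) (Ici 0) := by
    refine ContinuousOn.sub (ContinuousOn.sub ?_ ?_) ?_
    · exact (continuousOn_id.mul hw'cont).neg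
    · exact continuousOn_const.mul hwcont
    · exact (hwcont.abs.rpow_const (fun x _ => Or.inr hq1.le)).mul hwcont
  have hH0 : -((0 : ℝ) * w' 0) - α * w 0 - |w 0| ^ (q - 1) * w 0 < 0 := by
    rw [hw0, zero_mul, neg_zero, zero_sub]
    have h1 : 0 < α * a := mul_pos hα ha
    have h2 : 0 < |a| ^ (q - 1) * a :=
      mul_pos (Real.rpow_pos_of_pos (abs_pos.2 (ne_of_gt ha)) _) ha
    linarith
  have hev : ∀ᶠ r in 𝓝[Ici 0] (0 : ℝ),
      -(r * w' r) - α * w r - |w r| ^ (q - 1) * w r < 0 :=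
    Filter.Tendsto.eventually_lt_const hH0 (hHcont 0 (mem_Ici.2 le_rfl))
  obtain ⟨ε, hε0, hεsub⟩ := Metric.mem_nhdsWithin_iff.1 hev
  have hHneg : ∀ r : ℝ, 0 < r → r < ε →
      -(r * w' r) - α * w r - |w r| ^ (q - 1) * w r < 0 := by
    intro r hr hrε
    refine hεsub ⟨?_, hr.le⟩
    rw [Metric.mem_ball, Real.dist_eq, sub_zero, abs_of_pos hr]
    exact hrε
  -- φ is negative on (0, ε)
  have hφsmall : ∀ s : ℝ, 0 < s → s < ε → φ s < 0 := by
    intro s hs hsε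
    have hanti : StrictAntiOn (fun x => x ^ n * φ x) (Icc 0 s) := by
      refine strictAntiOn_of_deriv_neg (convex_Icc _ _) ?_ ?_
      · exact ((continuous_pow n).continuousOn.mul hφcont).mono
          (Icc_subset_Ici_self)
      · intro x hx
        rw [interior_Icc] at hx
        have hx0 : 0 < x := hx.1
        rw [(hGD x hx0).deriv]
        exact mul_neg_of_pos_of_neg (pow_pos hx0 n)
          (hHneg x hx0 (lt_trans hx.2 hsε))
    have hlt := hanti (left_mem_Icc.2 hs.le) (right_mem_Icc.2 hs.le) hs
    have hG0 : (0 : ℝ) ^ n * φ 0 = 0 := by rw [hφ0, mul_zero]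
    have hlt2 : s ^ n * φ s < (0 : ℝ) ^ n * φ 0 := hlt
    rw [hG0] at hlt2
    have hpow : 0 < s ^ n := pow_pos hs n
    nlinarith [hlt2]
  -- suppose w has a zero
  by_contra hcon
  push_neg at hcon
  obtain ⟨r2, hr2mem, hr2⟩ := hcon
  set Z : Set ℝ := {r | 0 ≤ r ∧ w r ≤ 0} with hZdef
  have hZne : Z.Nonempty := ⟨r2, hr2mem, hr2⟩
  have hZbd : BddBelow Z := ⟨0, fun z hz => hz.1⟩
  set r0 := sInf Z with hr0def
  have hr0nonneg : 0 ≤ r0 := le_csInf hZne (fun z hz => hz.1)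
  have hwr0le : w r0 ≤ 0 := by
    have hcw : ContinuousWithinAt w Z r0 :=
      ((hwcont r0 hr0nonneg).mono (fun z hz => hz.1))
    haveI : (𝓝[Z] r0).NeBot :=
      mem_closure_iff_nhdsWithin_neBot.1 (csInf_mem_closure hZne hZbd)
    exact le_of_tendsto hcw (eventually_nhdsWithin_of_forall (fun z hz => hz.2))
  have hr0pos : 0 < r0 := by
    rcases lt_or_eq_of_le hr0nonneg with h | h
    · exact h
    · exfalso; rw [← h, hw0] at hwr0le; linarith
  have hwpos : ∀ s : ℝ, 0 ≤ s → s < r0 → 0 < w s := by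
    intro s hs hslt
    by_contra h
    push_neg at h
    exact absurd (csInf_le hZbd ⟨hs, h⟩) (not_le.2 hslt)
  have hwr0 : w r0 = 0 := by
    refine le_antisymm hwr0le ?_
    have hcw : ContinuousAt w r0 :=
      (hwcont r0 hr0nonneg).continuousAt (Ici_mem_nhds hr0pos)
    have ht : Tendsto w (𝓝[<] r0) (𝓝 (w r0)) := hcw.tendsto.mono_left nhdsWithin_le_nhds
    exact ge_of_tendsto ht (Filter.eventually_of_mem
      (Ioo_mem_nhdsLT_of_mem ⟨hr0pos, le_rfl⟩)
      (fun s hs => (hwpos s hs.1.le hs.2).le))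
  -- φ is negative on (0, r0)
  have hφneg : ∀ s : ℝ, 0 < s → s < r0 → φ s < 0 := by
    by_contra hcon2
    push_neg at hcon2
    obtain ⟨s0, hs0pos, hs0lt, hs0φ⟩ := hcon2
    set T : Set ℝ := {r | 0 < r ∧ r < r0 ∧ 0 ≤ φ r} with hTdef
    have hTne : T.Nonempty := ⟨s0, hs0pos, hs0lt, hs0φ⟩
    have hTbd : BddBelow T := ⟨0, fun t ht => ht.1.le⟩
    set r1 := sInf T with hr1def
    have hr1ε : ε ≤ r1 := le_csInf hTne (fun t ht =>
      le_of_not_gt (fun h => absurd ht.2.2 (not_le.2 (hφsmall t ht.1 h))))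
    have hr1pos : 0 < r1 := lt_of_lt_of_le hε0 hr1ε
    have hr1lt : r1 < r0 := lt_of_le_of_lt (csInf_le hTbd ⟨hs0pos, hs0lt, hs0φ⟩) hs0lt
    have hφr1nonneg : 0 ≤ φ r1 := by
      have hcw : ContinuousWithinAt φ T r1 :=
        ((hφcont r1 hr1pos.le).mono (fun t ht => ht.1.le))
      haveI : (𝓝[T] r1).NeBot :=
        mem_closure_iff_nhdsWithin_neBot.1 (csInf_mem_closure hTne hTbd)
      exact ge_of_tendsto hcw (eventually_nhdsWithin_of_forall (fun t ht => ht.2.2))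
    have hφbefore : ∀ s : ℝ, 0 < s → s < r1 → φ s < 0 := by
      intro s hs hslt
      by_contra h
      push_neg at h
      exact absurd (csInf_le hTbd ⟨hs, lt_trans hslt hr1lt, h⟩) (not_le.2 hslt)
    have hφr1le : φ r1 ≤ 0 := by
      have hcw : ContinuousAt φ r1 :=
        (hφcont r1 hr1pos.le).continuousAt (Ici_mem_nhds hr1pos)
      have ht : Tendsto φ (𝓝[<] r1) (𝓝 (φ r1)) := hcw.tendsto.mono_left nhdsWithin_le_nhds
      exact le_of_tendsto ht (Filter.eventually_of_mem
        (Ioo_mem_nhdsLT_of_mem ⟨hr1pos, le_rfl⟩)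
        (fun s hs => (hφbefore s hs.1 hs.2).le))
    have hφr1 : φ r1 = 0 := le_antisymm hφr1le hφr1nonneg
    have hw'r1 : w' r1 = 0 := phiP_eq_zero hφr1
    have hwr1pos : 0 < w r1 := hwpos r1 hr1pos.le hr1lt
    have hdneg : deriv φ r1 < 0 := by
      rw [hODE r1 hr1pos, hφr1, hw'r1]
      have h1 : 0 < α * w r1 := mul_pos hα hwr1pos
      have h2 : 0 < |w r1| ^ (q - 1) * w r1 :=
        mul_pos (Real.rpow_pos_of_pos (abs_pos.2 (ne_of_gt hwr1pos)) _) hwr1pos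
      rw [mul_zero, neg_zero, mul_zero]
      linarith
    have hslope := hasDerivAt_iff_tendsto_slope.1 (hφD r1 hr1pos)
    have hev2 : ∀ᶠ s in 𝓝[≠] r1, slope φ r1 s < 0 :=
      Filter.Tendsto.eventually_lt_const hdneg hslope
    have hev3 : ∀ᶠ s in 𝓝[<] r1, slope φ r1 s < 0 :=
      hev2.filter_mono (nhdsWithin_mono r1 (fun x hx => ne_of_lt hx))
    have hev4 : ∀ᶠ s in 𝓝[<] r1, s ∈ Ioo 0 r1 :=
      Filter.eventually_of_mem (Ioo_mem_nhdsLT_of_mem ⟨hr1pos, le_rfl⟩) (fun x hx => hx)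
    obtain ⟨s, hs1, hs2⟩ := (hev3.and hev4).exists
    have hsl : slope φ r1 s = (φ s - φ r1) / (s - r1) := slope_def_field φ r1 s
    rw [hsl, hφr1, sub_zero] at hs1
    have hφs : φ s < 0 := hφbefore s hs2.1 hs2.2
    have hsr1 : s - r1 < 0 := sub_neg.2 hs2.2
    exact absurd (div_pos_of_neg_of_neg hφs hsr1) (not_lt.2 hs1.le)
  -- w is strictly decreasing on [0, r0]
  have hw'neg : ∀ s : ℝ, 0 < s → s < r0 → w' s < 0 :=
    fun s hs hlt => neg_of_phiP_neg (hφneg s hs hlt)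
  have hanti : StrictAntiOn w (Icc 0 r0) := by
    refine strictAntiOn_of_deriv_neg (convex_Icc _ _) (hwcont.mono Icc_subset_Ici_self) ?_
    intro x hx
    rw [interior_Icc] at hx
    have h3 : w' x = deriv w x := derivWithin_of_mem_nhds (Ici_mem_nhds hx.1)
    rw [← h3]
    exact hw'neg x hx.1 hx.2
  have hwlt : ∀ s : ℝ, 0 < s → s < r0 → w s < ab := by
    intro s hs hslt
    have := hanti (left_mem_Icc.2 hr0pos.le) ⟨hs.le, hslt.le⟩ hs
    rw [hw0] at this
    exact lt_of_lt_of_le this ha'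
  -- F is strictly increasing on [0, r0]
  have hmono : StrictMonoOn (fun x => x ^ (n + 1) * w x + x ^ n * φ x) (Icc 0 r0) := by
    refine strictMonoOn_of_deriv_pos (convex_Icc _ _) ?_ ?_
    · refine ContinuousOn.add ?_ ?_
      · exact ((continuous_pow (n + 1)).continuousOn.mul hwcont).mono Icc_subset_Ici_self
      · exact ((continuous_pow n).continuousOn.mul hφcont).mono Icc_subset_Ici_self
    · intro x hx
      rw [interior_Icc] at hx
      rw [(hFD x hx.1).deriv]
      have hwx : 0 < w x := hwpos x hx.1.le hx.2
      have habs : |w x| = w x := abs_of_pos hwx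
      have hlt2 : (w x) ^ (q - 1) < ab ^ (q - 1) :=
        Real.rpow_lt_rpow hwx.le (hwlt x hx.1 hx.2) hq1
      rw [hab_pow] at hlt2
      rw [habs]
      have hpow : 0 < x ^ n := pow_pos hx.1 n
      have hkey : 0 < ((↑(n + 1) : ℝ) - α) * w x - (w x) ^ (q - 1) * w x := by
        have : (w x) ^ (q - 1) * w x < ((↑(n + 1) : ℝ) - α) * w x :=
          mul_lt_mul_of_pos_right hlt2 hwx
        linarith
      exact mul_pos hpow hkey
  have hF0 : (0 : ℝ) ^ (n + 1) * w 0 + (0 : ℝ) ^ n * φ 0 = 0 := by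
    rw [hφ0, mul_zero, add_zero, zero_pow (Nat.succ_ne_zero n), zero_mul]
  have hFpos : 0 < r0 ^ (n + 1) * w r0 + r0 ^ n * φ r0 := by
    have h2 : (0 : ℝ) ^ (n + 1) * w 0 + (0 : ℝ) ^ n * φ 0
        < r0 ^ (n + 1) * w r0 + r0 ^ n * φ r0 :=
      hmono (left_mem_Icc.2 hr0pos.le) (right_mem_Icc.2 hr0pos.le) hr0pos
    rw [hF0] at h2
    exact h2
  have hφr0le : φ r0 ≤ 0 := by
    have hcw : ContinuousAt φ r0 :=
      (hφcont r0 hr0pos.le).continuousAt (Ici_mem_nhds hr0pos)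
    have ht : Tendsto φ (𝓝[<] r0) (𝓝 (φ r0)) := hcw.tendsto.mono_left nhdsWithin_le_nhds
    exact le_of_tendsto ht (Filter.eventually_of_mem
      (Ioo_mem_nhdsLT_of_mem ⟨hr0pos, le_rfl⟩)
      (fun s hs => (hφneg s hs.1 hs.2).le))
  rw [hwr0, mul_zero, zero_add] at hFpos
  have hpow : 0 < r0 ^ n := pow_pos hr0pos n
  nlinarith
end

section
/- Assume p₁ < p and N ≤ α. Then for any a ≠ 0, the global solution w(·,a) has at least one isolated zero in (0,∞), i.e. there exists r₁ > 0 with w(r₁,a) = 0 which is an isolated point of the zero set of w(·,a). -/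
open Set Filter Topology Asymptotics

lemma phiP_nonneg (p : ℝ) {x : ℝ} (hx : 0 ≤ x) : 0 ≤ phiP p x :=
  mul_nonneg (Real.rpow_nonneg (abs_nonneg x) _) hx

lemma phiP_of_neg (p : ℝ) {x : ℝ} (hx : x < 0) : phiP p x = -((-x) ^ (p - 1)) := by
  have h0 : 0 < -x := by linarith
  have : |x| = -x := abs_of_neg hx
  rw [phiP, this]
  have : (-x) ^ (p - 1) = (-x) ^ (p - 2) * (-x) := by
    rw [show p - 1 = (p - 2) + 1 by ring, Real.rpow_add h0, Real.rpow_one]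
  rw [this]; ring

lemma phiP_neg (p x : ℝ) : phiP p (-x) = -phiP p x := by
  simp [phiP]

/-- If `h' ≤ 0` on `Ici R` then `h` is antitone there. -/
lemma anti_of_hasDerivAt {h g : ℝ → ℝ} {R : ℝ}
    (hd : ∀ r ∈ Ici R, HasDerivAt h (g r) r) (hg : ∀ r ∈ Ici R, g r ≤ 0) :
    AntitoneOn h (Ici R) := by
  apply antitoneOn_of_deriv_nonpos (convex_Ici R)
    (fun r hr => (hd r hr).continuousAt.continuousWithinAt)
    (fun r hr => ((hd r (interior_subset hr)).differentiableAt).differentiableWithinAt)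
  intro r hr
  rw [(hd r (interior_subset hr)).deriv]
  exact hg r (interior_subset hr)

/-- A positive function cannot satisfy `w' ≤ -K r^{-m}` with `m < 1` on a half-line. -/
lemma decay_false {w g : ℝ → ℝ} {R K m : ℝ} (hR : 0 < R) (hK : 0 < K) (hm : m < 1)
    (hw : ∀ r ∈ Ici R, HasDerivAt w (g r) r)
    (hg : ∀ r ∈ Ici R, g r ≤ -K * r ^ (-m))
    (hpos : ∀ r ∈ Ici R, 0 < w r) : False := by
  set c : ℝ := K / (1 - m) with hc
  have hc0 : 0 < c := div_pos hK (by linarith)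
  have hd : ∀ r ∈ Ici R, HasDerivAt (fun s => w s + c * s ^ (1 - m)) (g r + K * r ^ (-m)) r := by
    intro r hr
    have hr0 : 0 < r := lt_of_lt_of_le hR hr
    have h1 : HasDerivAt (fun s : ℝ => s ^ (1 - m)) ((1 - m) * r ^ (1 - m - 1)) r :=
      Real.hasDerivAt_rpow_const (Or.inl (ne_of_gt hr0))
    have h2 : HasDerivAt (fun s : ℝ => c * s ^ (1 - m)) (c * ((1 - m) * r ^ (1 - m - 1))) r :=
      h1.const_mul c
    have h1m : (1 : ℝ) - m ≠ 0 := by linarith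
    have : c * ((1 - m) * r ^ (1 - m - 1)) = K * r ^ (-m) := by
      rw [hc, show (1 : ℝ) - m - 1 = -m by ring]
      field_simp
    rw [← this]
    exact (hw r hr).add h2
  have hanti : AntitoneOn (fun s => w s + c * s ^ (1 - m)) (Ici R) := by
    apply anti_of_hasDerivAt hd
    intro r hr
    have := hg r hr
    linarith
  -- choose r large so that c * r^(1-m) > w R + c * R^(1-m)
  have htop : Tendsto (fun r : ℝ => c * r ^ (1 - m)) atTop atTop :=
    (tendsto_rpow_atTop (by linarith)).const_mul_atTop hc0
  obtain ⟨r, hr1, hr2⟩ : ∃ r, R ≤ r ∧ w R + c * R ^ (1 - m) < c * r ^ (1 - m) := by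
    have := (htop.eventually_gt_atTop (w R + c * R ^ (1 - m))).and (eventually_ge_atTop R)
    obtain ⟨r, h1, h2⟩ := this.exists
    exact ⟨r, h2, h1⟩
  have := hanti (self_mem_Ici) (mem_Ici.2 hr1) hr1
  have hwr := hpos r (mem_Ici.2 hr1)
  simp only at this
  linarith

/-- From `w' ≤ -K r^{-m}` with `m > 1` and `w → 0`, lower bound `w r ≥ K/(m-1) r^{1-m}`. -/
lemma lower_bound {w g : ℝ → ℝ} {R K m : ℝ} (hR : 0 < R) (hK : 0 < K) (hm : 1 < m)
    (hw : ∀ r ∈ Ici R, HasDerivAt w (g r) r)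
    (hg : ∀ r ∈ Ici R, g r ≤ -K * r ^ (-m))
    (hlim : Tendsto w atTop (𝓝 0)) :
    ∀ r ∈ Ici R, K / (m - 1) * r ^ (1 - m) ≤ w r := by
  set c : ℝ := K / (m - 1) with hc
  have hc0 : 0 < c := div_pos hK (by linarith)
  have hd : ∀ r ∈ Ici R, HasDerivAt (fun s => w s - c * s ^ (1 - m)) (g r + K * r ^ (-m)) r := by
    intro r hr
    have hr0 : 0 < r := lt_of_lt_of_le hR hr
    have h1 : HasDerivAt (fun s : ℝ => s ^ (1 - m)) ((1 - m) * r ^ (1 - m - 1)) r :=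
      Real.hasDerivAt_rpow_const (Or.inl (ne_of_gt hr0))
    have h2 : HasDerivAt (fun s : ℝ => c * s ^ (1 - m)) (c * ((1 - m) * r ^ (1 - m - 1))) r :=
      h1.const_mul c
    have h1m : m - 1 ≠ 0 := by linarith
    have heq : c * ((1 - m) * r ^ (1 - m - 1)) = -(K * r ^ (-m)) := by
      rw [hc, show (1 : ℝ) - m - 1 = -m by ring]
      field_simp
      ring
    have := (hw r hr).sub h2
    rw [heq] at this
    rw [sub_neg_eq_add] at this
    exact this
  have hanti : AntitoneOn (fun s => w s - c * s ^ (1 - m)) (Ici R) := by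
    apply anti_of_hasDerivAt hd
    intro r hr
    have := hg r hr
    linarith
  intro r hr
  have hlim2 : Tendsto (fun s => w s - c * s ^ (1 - m)) atTop (𝓝 0) := by
    have h1 : Tendsto (fun s : ℝ => s ^ (1 - m)) atTop (𝓝 0) := by
      have := tendsto_rpow_neg_atTop (y := m - 1) (by linarith)
      simpa [show -(m-1) = 1 - m by ring] using this
    have := hlim.sub ((h1.const_mul c))
    simpa using this
  have : (0:ℝ) ≤ w r - c * r ^ (1 - m) := by
    apply le_of_tendsto hlim2
    filter_upwards [eventually_ge_atTop r] with s hs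
    exact hanti hr (le_trans hr hs) hs
  linarith

lemma rpow_inv_le {p x A : ℝ} (hp : 1 < p) (hx : 0 < x) (hA : 0 ≤ A) (h : A ≤ x ^ (p-1)) :
    A ^ (p-1)⁻¹ ≤ x := by
  have h1 : A ^ (p-1)⁻¹ ≤ (x ^ (p-1)) ^ (p-1)⁻¹ :=
    Real.rpow_le_rpow hA h (inv_nonneg.2 (by linarith))
  rwa [← Real.rpow_mul hx.le, mul_inv_cancel₀ (by linarith : p - 1 ≠ 0), Real.rpow_one] at h1

lemma phiP_le_neg {p x A : ℝ} (hp : 1 < p) (hA : 0 < A) (h : phiP p x ≤ -A) :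
    x ≤ -(A ^ (p-1)⁻¹) := by
  have hx : x < 0 := by
    by_contra hc
    push_neg at hc
    have := phiP_nonneg p hc
    linarith
  rw [phiP_of_neg p hx] at h
  have h2 : A ≤ (-x) ^ (p-1) := by linarith
  have := rpow_inv_le hp (by linarith : 0 < -x) hA.le h2
  linarith

lemma w_hasDerivAt {N : ℕ} {p q α a : ℝ} {w : ℝ → ℝ} (hw : IsGlobalSolution N p q α a w)
    {r : ℝ} (hr : 0 < r) : HasDerivAt w (derivWithin w (Ici 0) r) r := by
  have hmem : Ici (0:ℝ) ∈ 𝓝 r := Ici_mem_nhds hr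
  have hd : DifferentiableAt ℝ w r :=
    ((hw.1.differentiableOn one_ne_zero) r (le_of_lt hr)).differentiableAt hmem
  rw [derivWithin_of_mem_nhds hmem]
  exact hd.hasDerivAt

lemma U_hasDerivAt {N : ℕ} {p q α a : ℝ} {w : ℝ → ℝ} (hw : IsGlobalSolution N p q α a w)
    {r : ℝ} (hr : 0 < r) :
    HasDerivAt (fun s => phiP p (derivWithin w (Ici 0) s))
      (derivWithin (fun s => phiP p (derivWithin w (Ici 0) s)) (Ici 0) r) r := by
  have hmem : Ici (0:ℝ) ∈ 𝓝 r := Ici_mem_nhds hr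
  have hd : DifferentiableAt ℝ (fun s => phiP p (derivWithin w (Ici 0) s)) r :=
    ((hw.2.1.differentiableOn one_ne_zero) r (le_of_lt hr)).differentiableAt hmem
  rw [derivWithin_of_mem_nhds hmem]
  exact hd.hasDerivAt

lemma F_deriv {n : ℕ} {p q α a : ℝ} {w : ℝ → ℝ} (hw : IsGlobalSolution (n+1) p q α a w)
    {r : ℝ} (hr : 0 < r) :
    HasDerivAt (fun s => s ^ n * phiP p (derivWithin w (Ici 0) s) + s ^ (n+1) * w s)
      (r ^ n * ((((n:ℝ)+1) - α) * w r - |w r| ^ (q-1) * w r)) r := by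
  have hUd : HasDerivAt (fun s => phiP p (derivWithin w (Ici 0) s))
      (derivWithin (fun s => phiP p (derivWithin w (Ici 0) s)) (Ici 0) r) r := U_hasDerivAt hw hr
  have hwd : HasDerivAt w (derivWithin w (Ici 0) r) r := w_hasDerivAt hw hr
  have hode := hw.2.2.1 r hr
  have hrne : r ≠ 0 := ne_of_gt hr
  have hsolve : derivWithin (fun s => phiP p (derivWithin w (Ici 0) s)) (Ici 0) r
      = -((n:ℝ) / r * phiP p (derivWithin w (Ici 0) r) + r * derivWithin w (Ici 0) r
          + α * w r + |w r| ^ (q-1) * w r) := by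
    push_cast at hode
    linear_combination hode
  rw [hsolve] at hUd
  have h1 := (hasDerivAt_pow n r).mul hUd
  have h2 := (hasDerivAt_pow (n+1) r).mul hwd
  have h3 := h1.add h2
  refine HasDerivAt.congr_deriv h3 ?_
  symm
  push_cast
  cases n with
  | zero =>
    field_simp
    ring
  | succ k =>
    rw [Nat.succ_sub_one]
    field_simp
    ring


lemma arith_delta {p : ℝ} (n : ℝ) (hp : 1 < p) (hn : 0 ≤ n)
    (hp1 : 2*(n+1) < p*(n+2)) :
    0 < n*(p-1)⁻¹ - (n*(p-1)⁻¹-2)*(p-1)⁻¹ := by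
  have hne : p - 1 ≠ 0 := by linarith
  have hpp : 0 < (p-1)*(p-1) := by nlinarith
  have key : (n*(p-1)⁻¹ - (n*(p-1)⁻¹-2)*(p-1)⁻¹) * ((p-1)*(p-1))
      = p*(n+2) - 2*(n+1) := by
    field_simp
    ring
  nlinarith [key, hp1]

lemma arith_step {p m m₀ δ : ℝ} (hp : 1 < p)
    (e1 : δ ≤ p/(p-1)) (e2 : δ ≤ m₀ - (m₀-2)*(p-1)⁻¹)
    (h1 : 1 ≤ m) (h2 : m ≤ m₀) : δ ≤ m - (m-2)*(p-1)⁻¹ := by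
  have hne : p - 1 ≠ 0 := by linarith
  have hβ : 0 < (p-1)⁻¹ := inv_pos.2 (by linarith)
  have hd1 : (1:ℝ) - (1-2)*(p-1)⁻¹ = p/(p-1) := by
    field_simp
    ring
  rcases le_or_gt (p-1)⁻¹ 1 with hb | hb
  · nlinarith [mul_nonneg (by linarith : (0:ℝ) ≤ m - 1) (by linarith : (0:ℝ) ≤ 1 - (p-1)⁻¹)]
  · nlinarith [mul_nonneg (by linarith : (0:ℝ) ≤ m₀ - m) (by linarith : (0:ℝ) ≤ (p-1)⁻¹ - 1)]

set_option maxHeartbeats 1000000 in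
lemma no_pos_solution {n : ℕ} {p q α a : ℝ} {w : ℝ → ℝ}
    (hp : 1 < p) (hq : 1 < q) (hα : 0 < α)
    (hp1 : 2 * ((n:ℝ) + 1) < p * ((n:ℝ) + 2)) (hNα : (n:ℝ) + 1 ≤ α)
    (hw : IsGlobalSolution (n+1) p q α a w)
    (hpos : ∀ r, 0 < r → 0 < w r) : False := by
  have hβ : (0:ℝ) < (p-1)⁻¹ := inv_pos.2 (by linarith)
  set β : ℝ := (p-1)⁻¹ with hβdef
  set U : ℝ → ℝ := fun s => phiP p (derivWithin w (Ici 0) s) with hUdef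
  set F : ℝ → ℝ := fun s => s ^ n * U s + s ^ (n+1) * w s with hFdef
  have hFc : ContinuousOn F (Ici 0) :=
    (((continuous_pow n).continuousOn.mul hw.2.1.continuousOn).add
      ((continuous_pow (n+1)).continuousOn.mul hw.1.continuousOn))
  have hQpos : ∀ r, 0 < r → 0 < |w r| ^ (q-1) * w r := by
    intro r hr
    exact mul_pos (Real.rpow_pos_of_pos (abs_pos.2 (ne_of_gt (hpos r hr))) _) (hpos r hr)
  have hanti : StrictAntiOn F (Ici 0) := by
    apply strictAntiOn_of_deriv_neg (convex_Ici 0) hFc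
    rw [interior_Ici]
    intro x hx
    rw [(F_deriv hw hx).deriv]
    apply mul_neg_of_pos_of_neg (pow_pos hx n)
    have h1 : (((n:ℝ)+1) - α) * w x ≤ 0 :=
      mul_nonpos_of_nonpos_of_nonneg (by linarith) (hpos x hx).le
    linarith [hQpos x hx]
  have hF0 : F 0 = 0 := by
    simp [hFdef, hUdef, hw.2.2.2.2, phiP]
  set c : ℝ := -F 1 with hcdef
  have hc : 0 < c := by
    have := hanti self_mem_Ici (mem_Ici.2 zero_le_one) zero_lt_one
    rw [hF0] at this
    simp only [hcdef]
    linarith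
  have hstar : ∀ r, 1 ≤ r → r ^ n * U r + r ^ (n+1) * w r ≤ -c := by
    intro r hr
    rcases eq_or_lt_of_le hr with he | hl
    · rw [← he]; simp [hcdef, hFdef]
    · have := hanti (mem_Ici.2 zero_le_one) (mem_Ici.2 (by linarith)) hl
      simp only [hcdef]
      calc r ^ n * U r + r ^ (n+1) * w r = F r := rfl
        _ ≤ F 1 := this.le
        _ = -(-F 1) := by ring
  have hstarA : ∀ r, 1 ≤ r → phiP p (derivWithin w (Ici 0) r) ≤ -(c * r ^ (-(n:ℝ))) := by
    intro r hr
    have hr0 : (0:ℝ) < r := by linarith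
    have hrn : (0:ℝ) < r ^ n := pow_pos hr0 n
    have h1 : r ^ n * U r ≤ -c := by
      have h2 := hstar r hr
      nlinarith [mul_pos (pow_pos hr0 (n+1)) (hpos r hr0)]
    have h3 : U r ≤ -c / r ^ n := (le_div_iff₀ hrn).2 (by linarith)
    have h4 : c * r ^ (-(n:ℝ)) = c / r ^ n := by
      rw [Real.rpow_neg hr0.le, Real.rpow_natCast]
      ring
    calc phiP p (derivWithin w (Ici 0) r) = U r := rfl
      _ ≤ -c / r ^ n := h3
      _ = -(c * r ^ (-(n:ℝ))) := by rw [h4]; ring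
  have hstarB : ∀ r, 1 ≤ r → phiP p (derivWithin w (Ici 0) r) ≤ -(r * w r) := by
    intro r hr
    have hr0 : (0:ℝ) < r := by linarith
    have hrn : (0:ℝ) < r ^ n := pow_pos hr0 n
    have he : r ^ (n+1) * w r = (r * w r) * r ^ n := by rw [pow_succ]; ring
    have h1 := hstar r hr
    have h3 : U r * r ^ n ≤ -(r * w r) * r ^ n := by nlinarith
    have := le_of_mul_le_mul_right h3 hrn
    exact this
  -- gradient bound predicate
  set Grad : ℝ → Prop := fun m => ∃ K, 0 < K ∧ ∃ R, 1 ≤ R ∧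
      ∀ r, R ≤ r → derivWithin w (Ici 0) r ≤ -(K * r ^ (-m)) with hGdef
  have lemA : ∀ m, m < 1 → Grad m → False := by
    rintro m hm ⟨K, hK, R, hR, hbd⟩
    have hR0 : (0:ℝ) < R := by linarith
    exact decay_false hR0 hK hm
      (fun r hr => w_hasDerivAt hw (lt_of_lt_of_le hR0 hr))
      (fun r hr => by rw [neg_mul]; exact hbd r hr)
      (fun r hr => hpos r (lt_of_lt_of_le hR0 hr))
  have hw'neg : ∀ r, 1 ≤ r → derivWithin w (Ici 0) r < 0 := by
    intro r hr
    have hr0 : (0:ℝ) < r := by linarith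
    have hrw : 0 < r * w r := mul_pos hr0 (hpos r hr0)
    have h1 := phiP_le_neg hp hrw (hstarB r hr)
    have h2 := Real.rpow_pos_of_pos hrw (p-1)⁻¹
    linarith
  have hantiw : AntitoneOn w (Ici 1) :=
    anti_of_hasDerivAt
      (fun r hr => w_hasDerivAt hw (lt_of_lt_of_le zero_lt_one hr))
      (fun r hr => (hw'neg r hr).le)
  set w2 : ℝ → ℝ := fun t => w (max 1 t) with hw2def
  have hw2anti : Antitone w2 := fun s t hst =>
    hantiw (mem_Ici.2 (le_max_left 1 s)) (mem_Ici.2 (le_max_left 1 t))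
      (max_le_max le_rfl hst)
  have hbdd : BddBelow (range w2) := by
    refine ⟨0, ?_⟩
    rintro y ⟨t, rfl⟩
    exact (hpos _ (lt_of_lt_of_le zero_lt_one (le_max_left _ _))).le
  have hlim2 : Tendsto w2 atTop (𝓝 (⨅ t, w2 t)) := tendsto_atTop_ciInf hw2anti hbdd
  set L : ℝ := ⨅ t, w2 t with hLdef
  have hL0 : 0 ≤ L :=
    le_ciInf fun t => (hpos _ (lt_of_lt_of_le zero_lt_one (le_max_left _ _))).le
  have hwL : ∀ r, 1 ≤ r → L ≤ w r := by
    intro r hr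
    have := ciInf_le hbdd r
    simpa [hw2def, max_eq_right hr] using this
  have hLeq : L = 0 := by
    by_contra hne
    have hL : 0 < L := lt_of_le_of_ne hL0 (Ne.symm hne)
    apply lemA 0 (by norm_num)
    refine ⟨L ^ β, Real.rpow_pos_of_pos hL β, 1, le_rfl, ?_⟩
    intro r hr
    have hr0 : (0:ℝ) < r := by linarith
    have hB : phiP p (derivWithin w (Ici 0) r) ≤ -L := by
      have := hstarB r hr
      have h2 : L ≤ r * w r := by nlinarith [hwL r hr, hpos r hr0]
      linarith
    have := phiP_le_neg hp hL hB
    simpa [Real.rpow_zero] using this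
  have hlim : Tendsto w atTop (𝓝 0) := by
    rw [← hLeq]
    apply hlim2.congr'
    filter_upwards [eventually_ge_atTop (1:ℝ)] with t ht
    simp [hw2def, max_eq_right ht]
  have bootstrap : ∀ m, 1 < m → Grad m → Grad ((m-2) * β) := by
    rintro m hm ⟨K, hK, R, hR, hbd⟩
    have hR0 : (0:ℝ) < R := by linarith
    have hlow := lower_bound hR0 hK hm
      (fun r hr => w_hasDerivAt hw (lt_of_lt_of_le hR0 hr))
      (fun r hr => by rw [neg_mul]; exact hbd r hr) hlim
    have hK₁ : 0 < K / (m-1) := div_pos hK (by linarith)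
    refine ⟨(K/(m-1)) ^ β, Real.rpow_pos_of_pos hK₁ β, R, hR, ?_⟩
    intro r hr
    have hr1 : 1 ≤ r := le_trans hR hr
    have hr0 : (0:ℝ) < r := by linarith
    have hB := hstarB r hr1
    have hlow' := hlow r hr
    have hA : K/(m-1) * r ^ (2-m) ≤ r * w r := by
      have h1 : r * (K/(m-1) * r ^ (1-m)) ≤ r * w r :=
        mul_le_mul_of_nonneg_left hlow' hr0.le
      calc K/(m-1) * r ^ (2-m) = r * (K/(m-1) * r ^ (1-m)) := by
            rw [show (2:ℝ)-m = 1 + (1-m) by ring, Real.rpow_add hr0, Real.rpow_one]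
            ring
        _ ≤ r * w r := h1
    have hApos : 0 < K/(m-1) * r ^ (2-m) :=
      mul_pos hK₁ (Real.rpow_pos_of_pos hr0 _)
    have h5 : phiP p (derivWithin w (Ici 0) r) ≤ -(K/(m-1) * r ^ (2-m)) := by linarith
    have h6 := phiP_le_neg hp hApos h5
    have h7 : (K/(m-1) * r ^ (2-m)) ^ β = (K/(m-1)) ^ β * r ^ (-((m-2)*β)) := by
      rw [Real.mul_rpow hK₁.le (Real.rpow_pos_of_pos hr0 _).le,
        ← Real.rpow_mul hr0.le, show (2-m)*β = -((m-2)*β) by ring]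
    rw [← hβdef] at h6
    rw [h7] at h6
    exact h6
  set m₀ : ℝ := (n:ℝ) * β with hm₀def
  have hm₀0 : 0 ≤ m₀ := mul_nonneg (Nat.cast_nonneg n) hβ.le
  have init : Grad m₀ := by
    refine ⟨c ^ β, Real.rpow_pos_of_pos hc β, 1, le_rfl, ?_⟩
    intro r hr
    have hr0 : (0:ℝ) < r := by linarith
    have hApos : 0 < c * r ^ (-(n:ℝ)) := mul_pos hc (Real.rpow_pos_of_pos hr0 _)
    have h6 := phiP_le_neg hp hApos (hstarA r hr)
    have h7 : (c * r ^ (-(n:ℝ))) ^ β = c ^ β * r ^ (-m₀) := by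
      rw [Real.mul_rpow hc.le (Real.rpow_pos_of_pos hr0 _).le,
        ← Real.rpow_mul hr0.le, show (-(n:ℝ))*β = -m₀ by rw [hm₀def]; ring]
    rw [← hβdef] at h6
    rw [h7] at h6
    exact h6
  have hβp : β * (p-1) = 1 := inv_mul_cancel₀ (by linarith)
  set δ : ℝ := min (p/(p-1)) (m₀ - (m₀ - 2)*β) with hδdef
  have hδ2 : 0 < m₀ - (m₀-2)*β := by
    rw [hm₀def, hβdef]
    exact arith_delta (n:ℝ) hp (Nat.cast_nonneg n) hp1
  have hδ : 0 < δ := lt_min (div_pos (by linarith) (by linarith)) hδ2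
  have hstep : ∀ m, 1 ≤ m → m ≤ m₀ → δ ≤ m - (m-2)*β := by
    intro m h1 h2
    have e1 : δ ≤ p/(p-1) := min_le_left _ _
    have e2 : δ ≤ m₀ - (m₀-2)*β := min_le_right _ _
    rw [hβdef] at e2 ⊢
    exact arith_step hp e1 e2 h1 h2
  have gradMono : ∀ m m', m ≤ m' → Grad m → Grad m' := by
    rintro m m' hmm ⟨K, hK, R, hR, hbd⟩
    refine ⟨K, hK, R, hR, fun r hr => le_trans (hbd r hr) ?_⟩
    have hr1 : 1 ≤ r := le_trans hR hr
    have h := Real.rpow_le_rpow_of_exponent_le hr1 (neg_le_neg hmm)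
    exact neg_le_neg (mul_le_mul_of_nonneg_left h hK.le)
  have main : ∀ k : ℕ, ∀ m, m ≤ m₀ → m < 1 + k*δ → Grad m → False := by
    intro k
    induction k with
    | zero =>
      intro m _ hm hg
      exact lemA m (by push_cast at hm; linarith) hg
    | succ k ih =>
      intro m hm0 hm hg
      rcases lt_or_ge m 1 with h1 | h1
      · exact lemA m h1 hg
      rcases eq_or_lt_of_le h1 with h1e | h1l
      · have hg2 : Grad (3/2 : ℝ) := gradMono m (3/2) (by rw [← h1e]; norm_num) hg
        have hg3 := bootstrap (3/2) (by norm_num) hg2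
        exact lemA _ (by nlinarith) hg3
      · have hg2 := bootstrap m h1l hg
        have hd := hstep m h1 hm0
        push_cast at hm
        exact ih ((m-2)*β) (by linarith) (by linarith) hg2
  obtain ⟨k, hk⟩ := exists_nat_gt ((m₀ - 1)/δ)
  rw [div_lt_iff₀ hδ] at hk
  exact main k m₀ le_rfl (by linarith) init


lemma neg_solution {N : ℕ} {p q α a : ℝ} {w : ℝ → ℝ}
    (hw : IsGlobalSolution N p q α a w) :
    IsGlobalSolution N p q α (-a) (fun r => -w r) := by
  obtain ⟨h1, h2, h3, h4, h5⟩ := hw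
  have hder : ∀ s ∈ Ici (0:ℝ), derivWithin (fun r => -w r) (Ici 0) s
      = -derivWithin w (Ici 0) s := by
    intro s hs
    exact derivWithin.fun_neg
  have heq : ∀ s ∈ Ici (0:ℝ),
      phiP p (derivWithin (fun r => -w r) (Ici 0) s)
        = -phiP p (derivWithin w (Ici 0) s) := by
    intro s hs
    rw [hder s hs, phiP_neg]
  refine ⟨h1.neg, ?_, ?_, by simp [h4], ?_⟩
  · exact (h2.neg).congr heq
  · intro r hr
    have hr0 : (0:ℝ) < r := hr
    have hD : derivWithin (fun s => phiP p (derivWithin (fun r => -w r) (Ici 0) s)) (Ici 0) r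
        = -derivWithin (fun s => phiP p (derivWithin w (Ici 0) s)) (Ici 0) r := by
      rw [derivWithin_congr (fun s hs => heq s hs) (heq r hr0.le)]
      exact derivWithin.fun_neg
    rw [hD, heq r hr0.le, hder r hr0.le]
    have horig := h3 r hr
    simp only [abs_neg]
    ring_nf
    ring_nf at horig
    linarith
  · rw [hder 0 self_mem_Ici, h5, neg_zero]

lemma pos_case {n : ℕ} {p q α a : ℝ} {w : ℝ → ℝ}
    (hp : 1 < p) (hq : 1 < q) (hα : 0 < α)
    (hp1 : 2 * ((n:ℝ) + 1) < p * ((n:ℝ) + 2)) (hNα : (n:ℝ) + 1 ≤ α)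
    (hw : IsGlobalSolution (n+1) p q α a w) (ha : 0 < a) :
    ∃ r₁ : ℝ, 0 < r₁ ∧ IsIsolatedZeroOn w (Ici 0) r₁ := by
  have hcont : ContinuousOn w (Ici 0) := hw.1.continuousOn
  have hw0 : w 0 = a := hw.2.2.2.1
  -- positivity near 0
  have hev : ∀ᶠ s in 𝓝[Ici 0] (0:ℝ), 0 < w s := by
    have hc0 : ContinuousWithinAt w (Ici 0) 0 := hcont 0 self_mem_Ici
    have := hc0.eventually (by rw [hw0]; exact eventually_gt_nhds ha :
      ∀ᶠ y in 𝓝 (w 0), 0 < y)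
    exact this
  obtain ⟨ε, hε, hIcc⟩ := mem_nhdsGE_iff_exists_Icc_subset.1 hev
  -- existence of a zero
  have hzero : ∃ r, 0 < r ∧ w r = 0 := by
    by_contra hno
    push_neg at hno
    apply no_pos_solution hp hq hα hp1 hNα hw
    intro r hr
    rcases lt_trichotomy (w r) 0 with hlt | heq | hgt
    · exfalso
      have h0 : (0:ℝ) ∈ Ioo (w r) (w 0) := by rw [hw0]; exact ⟨hlt, ha⟩
      obtain ⟨t, ht, hwt⟩ := intermediate_value_Ioo' hr.le
        (hcont.mono (Icc_subset_Icc_left le_rfl |>.trans (by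
          intro x hx
          exact hx.1))) h0
      exact hno t ht.1 hwt
    · exact absurd heq (hno r hr)
    · exact hgt
  obtain ⟨r₀, hr₀, hwr₀⟩ := hzero
  -- the zero set beyond ε is closed and nonempty
  set Z : Set ℝ := Ici ε ∩ w ⁻¹' {0} with hZdef
  have hZc : IsClosed Z :=
    ContinuousOn.preimage_isClosed_of_isClosed
      (hcont.mono (Ici_subset_Ici.2 hε.le)) isClosed_Ici isClosed_singleton
  have hr₀Z : r₀ ∈ Z := by
    constructor
    · by_contra hc
      simp only [mem_Ici, not_le] at hc
      have : 0 < w r₀ := hIcc ⟨hr₀.le, hc.le⟩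
      rw [hwr₀] at this
      exact lt_irrefl 0 this
    · exact hwr₀
  have hZne : Z.Nonempty := ⟨r₀, hr₀Z⟩
  have hZbdd : BddBelow Z := ⟨ε, fun x hx => hx.1⟩
  set r₁ : ℝ := sInf Z with hr₁def
  have hr₁Z : r₁ ∈ Z := hZc.csInf_mem hZne hZbdd
  have hr₁pos : 0 < r₁ := lt_of_lt_of_le hε hr₁Z.1
  have hwr₁ : w r₁ = 0 := hr₁Z.2
  -- w positive on (0, r₁)
  have hposI : ∀ s, 0 < s → s < r₁ → 0 < w s := by
    intro s hs hs1
    rcases le_or_gt s ε with hse | hse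
    · exact hIcc ⟨hs.le, hse⟩
    · rcases lt_trichotomy (w s) 0 with hlt | heq | hgt
      · exfalso
        have hwε : 0 < w ε := hIcc ⟨hε.le, le_rfl⟩
        have h0 : (0:ℝ) ∈ Ioo (w s) (w ε) := ⟨hlt, hwε⟩
        obtain ⟨t, ht, hwt⟩ := intermediate_value_Ioo' hse.le
          (hcont.mono (fun x hx => le_trans hε.le hx.1)) h0
        have htZ : t ∈ Z := ⟨ht.1.le, hwt⟩
        have := csInf_le hZbdd htZ
        rw [← hr₁def] at this
        linarith [ht.2]
      · exfalso
        have hsZ : s ∈ Z := ⟨hse.le, heq⟩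
        have := csInf_le hZbdd hsZ
        rw [← hr₁def] at this
        linarith
      · exact hgt
  -- F is strictly decreasing on [0, r₁]
  set U : ℝ → ℝ := fun s => phiP p (derivWithin w (Ici 0) s) with hUdef
  set F : ℝ → ℝ := fun s => s ^ n * U s + s ^ (n+1) * w s with hFdef
  have hFc : ContinuousOn F (Icc 0 r₁) :=
    ((((continuous_pow n).continuousOn.mul hw.2.1.continuousOn).add
      ((continuous_pow (n+1)).continuousOn.mul hw.1.continuousOn))).mono
      (fun x hx => hx.1)
  have hanti : StrictAntiOn F (Icc 0 r₁) := by
    apply strictAntiOn_of_deriv_neg (convex_Icc 0 r₁) hFc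
    rw [interior_Icc]
    intro x hx
    rw [(F_deriv hw hx.1).deriv]
    apply mul_neg_of_pos_of_neg (pow_pos hx.1 n)
    have hwx : 0 < w x := hposI x hx.1 hx.2
    have h1 : (((n:ℝ)+1) - α) * w x ≤ 0 :=
      mul_nonpos_of_nonpos_of_nonneg (by linarith) hwx.le
    have h2 : 0 < |w x| ^ (q-1) * w x :=
      mul_pos (Real.rpow_pos_of_pos (abs_pos.2 (ne_of_gt hwx)) _) hwx
    linarith
  have hF0 : F 0 = 0 := by
    simp [hFdef, hUdef, hw.2.2.2.2, phiP]
  have hFr₁ : F r₁ < 0 := by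
    have := hanti (left_mem_Icc.2 hr₁pos.le) (right_mem_Icc.2 hr₁pos.le) hr₁pos
    rwa [hF0] at this
  have hUneg : derivWithin w (Ici 0) r₁ < 0 := by
    have hFval : F r₁ = r₁ ^ n * U r₁ := by
      simp [hFdef, hwr₁]
    rw [hFval] at hFr₁
    have hrn : (0:ℝ) < r₁ ^ n := pow_pos hr₁pos n
    have hU : U r₁ < 0 := by nlinarith
    by_contra hc
    push_neg at hc
    have := phiP_nonneg p hc
    rw [hUdef] at hU
    simp only at hU
    linarith
  -- the zero is isolated
  have hder : HasDerivAt w (derivWithin w (Ici 0) r₁) r₁ := w_hasDerivAt hw hr₁pos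
  have hslope := hasDerivAt_iff_tendsto_slope.1 hder
  have hne := hslope.eventually_ne (ne_of_lt hUneg)
  refine ⟨r₁, hr₁pos, mem_Ici.2 hr₁pos.le, hwr₁, ?_⟩
  have hmono : 𝓝[Ici 0 \ {r₁}] r₁ ≤ 𝓝[{r₁}ᶜ] r₁ :=
    nhdsWithin_mono _ (fun x hx => hx.2)
  filter_upwards [hmono hne] with s hs
  intro h0
  apply hs
  rw [slope_def_field, h0, hwr₁]
  simp


/-- Assume `p₁ = 2N/(N+1) < p` and `N ≤ α`. Then for any `a ≠ 0`, the global
solution `w(·,a)` has at least one isolated zero in `(0,∞)`. -/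
theorem stmt3 (N : ℕ) (hN : 1 ≤ N) (p q α : ℝ) (hp : 1 < p) (hq : 1 < q) (hα : 0 < α)
    (hp1 : 2 * (N : ℝ) / (N + 1) < p) (hNα : (N : ℝ) ≤ α)
    (a : ℝ) (ha : a ≠ 0) (w : ℝ → ℝ) (hw : IsGlobalSolution N p q α a w) :
    ∃ r₁ : ℝ, 0 < r₁ ∧ IsIsolatedZeroOn w (Ici 0) r₁ := by
  set n : ℕ := N - 1 with hn
  have hNn : N = n + 1 := (Nat.succ_pred_eq_of_pos hN).symm
  have hNr : (N:ℝ) = (n:ℝ) + 1 := by rw [hNn]; push_cast; ring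
  have hden : (0:ℝ) < (N:ℝ) + 1 := by positivity
  rw [div_lt_iff₀ hden] at hp1
  have hp1' : 2 * ((n:ℝ) + 1) < p * ((n:ℝ) + 2) := by rw [hNr] at hp1; linarith
  have hNα' : (n:ℝ) + 1 ≤ α := by rw [hNr] at hNα; exact hNα
  rw [hNn] at hw
  rcases ha.lt_or_gt with haneg | hapos
  · have hw2 := neg_solution hw
    have := pos_case hp hq hα hp1' hNα' hw2 (by linarith : 0 < -a)
    obtain ⟨r₁, hr₁, hmem, hzero, hev⟩ := this
    refine ⟨r₁, hr₁, hmem, by simpa using hzero, ?_⟩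
    filter_upwards [hev] with s hs h0
    exact hs (by simp [h0])
  · exact pos_case hp hq hα hp1' hNα' hw hapos
end
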